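/- A symmetric matrix X ∈ {0,1}^{n×n} is positive semidefinite if and only if X = Σ_{i=1}^k x_i x_iᵀ for some vectors x_1, …, x_k ∈ {0,1}^n. -/

import Mathlib

open Matrix

section Aux
variable {n : ℕ} {X : Matrix (Fin n) (Fin n) ℝ}

lemma quad3 (hpsd : X.PosSemidef) (a b c : ℝ) (i j k : Fin n) :
    0 ≤ a*a*X i i + a*b*X i j + a*c*X i k + b*a*X j i + b*b*X j j + b*c*X j k
      + c*a*X k i + c*b*X k j + c*c*X k k := by
  have h := hpsd.dotProduct_mulVec_nonneg (a • (Pi.single i 1 : Fin n → ℝ) + b • (Pi.single j 1 : Fin n → ℝ)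
    + c • (Pi.single k 1 : Fin n → ℝ))
  simp only [star_trivial, Matrix.mulVec_add, Matrix.mulVec_smul, Matrix.mulVec_single,
    dotProduct_add, add_dotProduct, dotProduct_smul, smul_dotProduct, smul_eq_mul,
    dotProduct_single, single_dotProduct, Pi.smul_apply, Pi.add_apply, mul_one] at h
  simp only [Matrix.col_apply, MulOpposite.op_one, one_smul, one_mul] at h
  nlinarith [h]

lemma diag_zero (hpsd : X.PosSemidef) (hsym : X.IsSymm)
    (hbin : ∀ i j, X i j = 0 ∨ X i j = 1) {i : Fin n} (hi : X i i = 0) (j : Fin n) :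
    X i j = 0 := by
  rcases hbin i j with h | h
  · exact h
  · exfalso
    have hq := quad3 hpsd 1 (-2) 0 j i i
    have hs : X j i = X i j := hsym.apply i j
    rcases hbin j j with h2 | h2 <;> nlinarith [hq]

lemma trans_one (hpsd : X.PosSemidef) (hsym : X.IsSymm)
    (hbin : ∀ i j, X i j = 0 ∨ X i j = 1) {i j k : Fin n}
    (hij : X i j = 1) (hjk : X j k = 1) : X i k = 1 := by
  have hii : X i i = 1 := by
    rcases hbin i i with h | h
    · exact absurd (diag_zero hpsd hsym hbin h j) (by rw [hij]; norm_num)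
    · exact h
  have hjj : X j j = 1 := by
    rcases hbin j j with h | h
    · exact absurd (diag_zero hpsd hsym hbin h k) (by rw [hjk]; norm_num)
    · exact h
  have hkk : X k k = 1 := by
    rcases hbin k k with h | h
    · exfalso
      have h0 : X k j = 0 := diag_zero hpsd hsym hbin h j
      rw [hsym.apply j k, hjk] at h0
      norm_num at h0
    · exact h
  rcases hbin i k with h | h
  · exfalso
    have hq := quad3 hpsd 1 (-1) 1 i j k
    have h1 : X j i = X i j := hsym.apply i j
    have h2 : X k i = X i k := hsym.apply i k
    have h3 : X k j = X j k := hsym.apply j k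
    nlinarith [hq]
  · exact h

lemma psd_vecMulVec_self (w : Fin n → ℝ) : (Matrix.vecMulVec w w).PosSemidef := by
  refine Matrix.PosSemidef.of_dotProduct_mulVec_nonneg ?_ ?_
  · ext i j
    simp [Matrix.conjTranspose_apply, Matrix.vecMulVec_apply, mul_comm]
  · intro v
    have key : (star v) ⬝ᵥ (Matrix.vecMulVec w w *ᵥ v) = (w ⬝ᵥ v) * (w ⬝ᵥ v) := by
      simp only [star_trivial, Matrix.mulVec, dotProduct, Matrix.vecMulVec_apply,
        Finset.mul_sum, Finset.sum_mul]
      refine Finset.sum_congr rfl fun a _ => Finset.sum_congr rfl fun b _ => by ring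
    rw [key]
    exact mul_self_nonneg _

lemma psd_sum {k : ℕ} (M : Fin k → Matrix (Fin n) (Fin n) ℝ)
    (h : ∀ i, (M i).PosSemidef) : (∑ i, M i).PosSemidef := by
  refine Finset.sum_induction M Matrix.PosSemidef ?_ ?_ (fun i _ => h i)
  · intro a b ha hb
    exact Matrix.PosSemidef.of_dotProduct_mulVec_nonneg (ha.1.add hb.1) fun v => by
      rw [Matrix.add_mulVec, dotProduct_add]
      exact add_nonneg (ha.dotProduct_mulVec_nonneg v) (hb.dotProduct_mulVec_nonneg v)
  · exact ⟨Matrix.isHermitian_zero, fun v => by simp⟩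

end Aux

theorem binary_psd_iff_sum_of_binary_rank_one {n : ℕ}
    (X : Matrix (Fin n) (Fin n) ℝ) (hsym : X.IsSymm)
    (hbin : ∀ i j, X i j = 0 ∨ X i j = 1) :
    X.PosSemidef ↔
      ∃ (k : ℕ) (x : Fin k → Fin n → ℝ),
        (∀ i j, x i j = 0 ∨ x i j = 1) ∧
        X = ∑ i, Matrix.vecMulVec (x i) (x i) := by
  classical
  constructor
  · intro hpsd
    refine ⟨n, fun i => if (X i i = 1 ∧ ∀ i' < i, X i' i = 0) then X i else 0, ?_, ?_⟩
    · intro i j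
      by_cases h : X i i = 1 ∧ ∀ i' < i, X i' i = 0
      · simpa only [if_pos h] using hbin i j
      · simp only [if_neg h]; left; rfl
    · ext j l
      rw [Matrix.sum_apply]
      symm
      simp only [Matrix.vecMulVec_apply]
      have key : ∀ i : Fin n,
          (if (X i i = 1 ∧ ∀ i' < i, X i' i = 0) then X i else 0) j *
          (if (X i i = 1 ∧ ∀ i' < i, X i' i = 0) then X i else 0) l
          = if (X i i = 1 ∧ ∀ i' < i, X i' i = 0) then X i j * X i l else 0 := by
        intro i
        by_cases h : X i i = 1 ∧ ∀ i' < i, X i' i = 0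
        · simp only [if_pos h]
        · simp only [if_neg h]; simp
      simp only [key]
      rcases hbin j l with hjl | hjl
      · rw [hjl]
        refine Finset.sum_eq_zero fun i _ => ?_
        by_cases h : X i i = 1 ∧ ∀ i' < i, X i' i = 0
        · rw [if_pos h]
          rcases hbin i j with h1 | h1
          · rw [h1, zero_mul]
          · rcases hbin i l with h2 | h2
            · rw [h2, mul_zero]
            · exfalso
              have : X j l = 1 :=
                trans_one hpsd hsym hbin (hsym.apply i j ▸ h1 : X j i = 1) h2
              rw [hjl] at this; norm_num at this
        · rw [if_neg h]
      · rw [hjl]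
        have hjj : X j j = 1 := by
          rcases hbin j j with h | h
          · exact absurd (diag_zero hpsd hsym hbin h l) (by rw [hjl]; norm_num)
          · exact h
        set s : Finset (Fin n) := Finset.univ.filter (fun i => X i j = 1) with hs
        have hne : s.Nonempty := ⟨j, by simp [hs, hjj]⟩
        set i₀ := s.min' hne with hi₀
        have hi₀j : X i₀ j = 1 := by
          have := s.min'_mem hne
          simpa [hs] using this
        have hmin : ∀ i ∈ s, i₀ ≤ i := fun i hi => s.min'_le i hi
        have hP₀ : X i₀ i₀ = 1 ∧ ∀ i' < i₀, X i' i₀ = 0 := by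
          constructor
          · rcases hbin i₀ i₀ with h | h
            · exact absurd (diag_zero hpsd hsym hbin h j) (by rw [hi₀j]; norm_num)
            · exact h
          · intro i' hi'
            rcases hbin i' i₀ with h | h
            · exact h
            · exfalso
              have h1 : X i' j = 1 := trans_one hpsd hsym hbin h hi₀j
              have := hmin i' (by simp [hs, h1])
              exact absurd hi' (not_lt.mpr this)
        have hi₀l : X i₀ l = 1 := trans_one hpsd hsym hbin hi₀j hjl
        rw [Finset.sum_eq_single i₀]
        · rw [if_pos hP₀, hi₀j, hi₀l, mul_one]
        · intro i _ hne'
          by_cases h : X i i = 1 ∧ ∀ i' < i, X i' i = 0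
          · rw [if_pos h]
            rcases hbin i j with h1 | h1
            · rw [h1, zero_mul]
            · exfalso
              have hle : i₀ ≤ i := hmin i (by simp [hs, h1])
              have hlt : i₀ < i := lt_of_le_of_ne hle (Ne.symm hne')
              have h2 : X i₀ i = 1 :=
                trans_one hpsd hsym hbin hi₀j (hsym.apply i j ▸ h1 : X j i = 1)
              have h3 := h.2 i₀ hlt
              rw [h3] at h2; norm_num at h2
          · rw [if_neg h]
        · intro h; exact absurd (Finset.mem_univ i₀) h
  · rintro ⟨k, x, -, rfl⟩
    exact psd_sum _ fun i => psd_vecMulVec_self (x i)
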